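/- Let p ≥ 2 be an integer, let t ≥ 0 and m > t be integers with d := m − t satisfying 0 ≤ d ≤ p. Let β₀, β₁, …, β_p be distinct real numbers, and let c₀, c₁, …, c_p be the unique solution of the Vandermonde system ∑_{k=0}^p c_k β_k^ℓ = δ_{ℓ,d} for ℓ = 0, 1, …, p. Set A_ℓ = ∑_{k=0}^p c_k β_k^{m−ℓ} for 0 ≤ ℓ ≤ t−1. Then for every y ∈ ℝ, y^t = (1/C(m,t)) ( ∑_{k=0}^p c_k (y+β_k)^m − ∑_{ℓ=0}^{t−1} C(m,ℓ) A_ℓ y^ℓ ), where C(m,t) denotes the binomial coefficient m choose t. -/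

import Mathlib

/-- Linear representation of monomials: if `c₀,…,c_p` solves the Vandermonde system
`∑ₖ cₖ βₖ^ℓ = δ_{ℓ,m−t}` (`ℓ = 0,…,p`) for distinct nodes `β₀,…,β_p`, then
`y^t = (1/C(m,t))(∑ₖ cₖ (y+βₖ)^m − ∑_{ℓ<t} C(m,ℓ) A_ℓ y^ℓ)` with
`A_ℓ = ∑ₖ cₖ βₖ^{m−ℓ}`. -/
theorem monomial_linear_representation (p t m : ℕ) (hp : 2 ≤ p) (htm : t < m)
    (hdp : m - t ≤ p) (β c : Fin (p + 1) → ℝ) (hβ : Function.Injective β)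
    (hc : ∀ ℓ : ℕ, ℓ ≤ p →
      (∑ k, c k * β k ^ ℓ) = if ℓ = m - t then 1 else 0) :
    ∀ y : ℝ, y ^ t = (1 / (m.choose t : ℝ)) *
      ((∑ k, c k * (y + β k) ^ m) -
        ∑ ℓ ∈ Finset.range t,
          (m.choose ℓ : ℝ) * (∑ k, c k * β k ^ (m - ℓ)) * y ^ ℓ) := by
  intro y
  have hexp : (∑ k, c k * (y + β k) ^ m) =
      ∑ ℓ ∈ Finset.range (m + 1),
        (m.choose ℓ : ℝ) * (∑ k, c k * β k ^ (m - ℓ)) * y ^ ℓ := by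
    have h1 : ∀ k : Fin (p + 1), c k * (y + β k) ^ m =
        ∑ ℓ ∈ Finset.range (m + 1),
          (m.choose ℓ : ℝ) * (c k * β k ^ (m - ℓ)) * y ^ ℓ := by
      intro k
      rw [add_pow, Finset.mul_sum]
      exact Finset.sum_congr rfl fun ℓ _ => by ring
    rw [Finset.sum_congr rfl fun k _ => h1 k, Finset.sum_comm]
    refine Finset.sum_congr rfl fun ℓ _ => ?_
    rw [Finset.mul_sum, Finset.sum_mul]
  have hsplit : Finset.range (m + 1) = Finset.range t ∪ Finset.Ico t (m + 1) := by
    rw [Finset.range_eq_Ico, Finset.range_eq_Ico, Finset.Ico_union_Ico_eq_Ico (Nat.zero_le t) (show t ≤ m + 1 by omega)]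
  have hIco : ∑ ℓ ∈ Finset.Ico t (m + 1),
      (m.choose ℓ : ℝ) * (∑ k, c k * β k ^ (m - ℓ)) * y ^ ℓ
      = (m.choose t : ℝ) * y ^ t := by
    rw [Finset.sum_eq_single t]
    · rw [hc (m - t) hdp, if_pos rfl, mul_one]
    · intro ℓ hℓ hne
      rw [Finset.mem_Ico] at hℓ
      rw [hc (m - ℓ) (by omega), if_neg (by omega), mul_zero, zero_mul]
    · intro h
      exact absurd (Finset.mem_Ico.mpr ⟨le_refl t, by omega⟩) h
  have hdisj : Disjoint (Finset.range t) (Finset.Ico t (m + 1)) := by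
    rw [Finset.range_eq_Ico]
    exact Finset.Ico_disjoint_Ico_consecutive 0 t (m + 1)
  rw [hexp, hsplit, Finset.sum_union hdisj, hIco]
  have hch : (m.choose t : ℝ) ≠ 0 := Nat.cast_ne_zero.mpr (Nat.choose_pos htm.le).ne'
  rw [add_sub_cancel_left]
  field_simp
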